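/- For every real p ≥ 1, the function Q(r) = (3-r)r/(3(1-r)) + ∑_{n=2}^∞ r^n/(3n²) + ∑_{n=2}^∞ (2/3 + 1/(3n²))^p r^{np} - (12 + π²)/36 satisfies Q(0) < 0 and Q(1/2) ≥ (2 - (log 2)²)/6 > 0, and is strictly increasing on (0, 1/2), hence has a unique root in (0, 1/2). -/

import Mathlib

open Real Filter Set Topology


noncomputable def myL (x : ℝ) : ℝ := ∑' n : ℕ, x ^ (n+1) / ((n:ℝ)+1)^2

lemma mySumInvSq : Summable (fun n : ℕ => 1/((n:ℝ)+1)^2) := by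
  have h := Real.summable_one_div_nat_pow.mpr (le_refl 2)
  have := (summable_nat_add_iff 1).mpr h
  refine this.congr fun n => by push_cast; ring

lemma myBound {x : ℝ} (h : |x| ≤ 1) (n : ℕ) (k : ℕ) :
    ‖x ^ (n+k) / ((n:ℝ)+1)^2‖ ≤ 1/((n:ℝ)+1)^2 := by
  have h1 : (0:ℝ) < ((n:ℝ)+1)^2 := by positivity
  rw [norm_div, norm_pow]
  simp only [Real.norm_eq_abs]
  rw [abs_of_pos h1]
  gcongr
  exact pow_le_one₀ (abs_nonneg x) h

lemma dilogSummable {x : ℝ} (h : |x| ≤ 1) :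
    Summable (fun n : ℕ => x ^ (n+1) / ((n:ℝ)+1)^2) :=
  Summable.of_norm (mySumInvSq.of_nonneg_of_le (fun n => norm_nonneg _)
    fun n => myBound h n 1)

lemma myL_zero : myL 0 = 0 := by simp [myL]

lemma myL_one : myL 1 = Real.pi^2/6 := by
  have h := hasSum_zeta_two
  have h2 := (hasSum_nat_add_iff' 1).mpr h
  norm_num at h2
  rw [myL]
  refine HasSum.tsum_eq (h2.congr fun n => by push_cast; norm_num)
  
lemma myL_contOn : ContinuousOn myL (Icc (-1:ℝ) 1) := by
  refine continuousOn_tsum (f := fun (n:ℕ) (x:ℝ) => x ^ (n+1) / ((n:ℝ)+1)^2)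
    (u := fun n : ℕ => 1/((n:ℝ)+1)^2)
    (fun n => (continuous_pow _).continuousOn.div_const _) mySumInvSq fun n x hx => by
      exact myBound (abs_le.mpr ⟨hx.1, hx.2⟩) n 1

lemma myL_hasDeriv {x : ℝ} (hx : x ∈ Ioo (0:ℝ) 1) :
    HasDerivAt myL (-Real.log (1-x)/x) x := by
  obtain ⟨hx0, hx1⟩ := hx
  set c : ℝ := (1+x)/2 with hc
  have hc1 : c < 1 := by rw [hc]; linarith
  have hc0 : 0 < c := by rw [hc]; linarith
  have hxc : x < c := by rw [hc]; linarith
  have key : HasDerivAt myL (∑' n : ℕ, x ^ n / ((n:ℝ)+1)) x := by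
    refine hasDerivAt_tsum_of_isPreconnected (F := ℝ) (𝕜 := ℝ)
      (g := fun (n:ℕ) (y:ℝ) => y ^ (n+1) / ((n:ℝ)+1)^2)
      (g' := fun (n:ℕ) (y:ℝ) => y ^ n / ((n:ℝ)+1)) (u := fun n : ℕ => c ^ n)
      (summable_geometric_of_lt_one hc0.le hc1) (isOpen_Ioo (a := -c) (b := c))
      (convex_Ioo _ _).isPreconnected (fun n y hy => ?_) (fun n y hy => ?_)
      (Set.mem_Ioo.mpr ⟨by linarith, hc0⟩) ?_ (Set.mem_Ioo.mpr ⟨by linarith, hxc⟩)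
    · have h := (hasDerivAt_pow (n+1) y).div_const (((n:ℝ)+1)^2)
      refine h.congr_deriv ?_
      have hn : ((n:ℝ)+1) ≠ 0 := by positivity
      push_cast
      field_simp
    · rw [norm_div]
      simp only [Real.norm_eq_abs, norm_pow]
      have hy' : |y| ≤ c := by
        rw [abs_le]; exact ⟨hy.1.le, hy.2.le⟩
      have h1 : (1:ℝ) ≤ |(n:ℝ)+1| := by
        rw [abs_of_pos (by positivity : (0:ℝ) < (n:ℝ)+1)]
        linarith [Nat.cast_nonneg (α := ℝ) n]
      calc |y|^n / |(n:ℝ)+1| ≤ |y|^n := div_le_self (by positivity) h1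
        _ ≤ c^n := pow_le_pow_left₀ (abs_nonneg y) hy' n
    · exact summable_zero.congr fun n => by simp
  convert key using 1
  have hmain := hasSum_pow_div_log_of_abs_lt_one
    (x := x) (by rw [abs_of_pos hx0]; exact hx1)
  have h2 := hmain.div_const x
  have heq : (fun n : ℕ => x ^ (n+1) / ((n:ℝ)+1) / x) = fun n : ℕ => x ^ n / ((n:ℝ)+1) := by
    funext n
    rw [pow_succ]
    field_simp
  rw [heq] at h2
  exact h2.tsum_eq.symm

noncomputable def myG (x : ℝ) : ℝ := myL x + myL (1-x) + Real.log x * Real.log (1-x)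

lemma myG_hasDeriv {x : ℝ} (hx : x ∈ Ioo (0:ℝ) 1) : HasDerivAt myG 0 x := by
  obtain ⟨hx0, hx1⟩ := hx
  have hx1' : (0:ℝ) < 1 - x := by linarith
  have h1 : HasDerivAt myL (-Real.log (1-x)/x) x := myL_hasDeriv ⟨hx0, hx1⟩
  have h2' : HasDerivAt myL (-Real.log (1-(1-x))/(1-x)) (1-x) :=
    myL_hasDeriv ⟨by linarith, by linarith⟩
  have hlin : HasDerivAt (fun y : ℝ => 1 - y) (-1) x := by
    simpa using (hasDerivAt_id x).const_sub 1
  have h2 : HasDerivAt (fun y => myL (1-y)) ((-Real.log (1-(1-x))/(1-x)) * (-1)) x :=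
    h2'.comp x hlin
  have h3 : HasDerivAt (fun y : ℝ => Real.log y * Real.log (1-y))
      ((1/x) * Real.log (1-x) + Real.log x * (-(1/(1-x)))) x := by
    have ha : HasDerivAt Real.log (1/x) x := by
      simpa [one_div] using Real.hasDerivAt_log hx0.ne'
    have hb' : HasDerivAt Real.log (1/(1-x)) (1-x) := by
      simpa [one_div] using Real.hasDerivAt_log hx1'.ne'
    have hb : HasDerivAt (fun y : ℝ => Real.log (1-y)) ((1/(1-x)) * (-1)) x :=
      hb'.comp x hlin
    have := ha.mul hb
    refine this.congr_deriv ?_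
    ring
  have := (h1.add h2).add h3
  refine this.congr_deriv ?_
  have h4 : 1 - (1-x) = x := by ring
  rw [h4]
  field_simp
  ring

lemma myG_const {x : ℝ} (hx : x ∈ Ioo (0:ℝ) 1) {y : ℝ} (hy : y ∈ Ioo (0:ℝ) 1) :
    myG x = myG y := by
  wlog hxy : x < y generalizing x y
  · rcases eq_or_lt_of_le (not_lt.mp hxy) with h | h
    · rw [h]
    · exact (this hy hx h).symm
  have hsub : Icc x y ⊆ Ioo (0:ℝ) 1 := fun z hz =>
    ⟨lt_of_lt_of_le hx.1 hz.1, lt_of_le_of_lt hz.2 hy.2⟩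
  have hcont : ContinuousOn myG (Icc x y) := fun z hz =>
    (myG_hasDeriv (hsub hz)).continuousAt.continuousWithinAt
  have hderiv : ∀ z ∈ Ioo x y, HasDerivAt myG ((fun _ => (0:ℝ)) z) z := fun z hz =>
    myG_hasDeriv (hsub ⟨hz.1.le, hz.2.le⟩)
  obtain ⟨c, hc, hc2⟩ := exists_hasDerivAt_eq_slope myG (fun _ => 0) hxy hcont hderiv
  have hyx : y - x ≠ 0 := sub_ne_zero.mpr hxy.ne'
  have : myG y - myG x = 0 := by
    have h := hc2.symm
    rw [div_eq_iff hyx] at h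
    simpa using h
  linarith

lemma logSqueeze : Tendsto (fun t => Real.log (1-t) * Real.log t)
    (𝓝[Ioo (0:ℝ) 1] 0) (𝓝 0) := by
  have base : Tendsto (fun t => Real.log t * t) (𝓝[>] (0:ℝ)) (𝓝 0) := by
    simpa using tendsto_log_mul_rpow_nhdsGT_zero zero_lt_one
  have base' : Tendsto (fun t => Real.log t * t) (𝓝[Ioo (0:ℝ) 1] 0) (𝓝 0) :=
    base.mono_left (nhdsWithin_mono _ Ioo_subset_Ioi_self)
  have hg : Tendsto (fun t => 2 * |Real.log t * t|) (𝓝[Ioo (0:ℝ) 1] 0) (𝓝 0) := by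
    have := (base'.abs).const_mul 2
    simpa using this
  refine squeeze_zero_norm' ?_ hg
  filter_upwards [self_mem_nhdsWithin,
    nhdsWithin_le_nhds (Iio_mem_nhds (by norm_num : (0:ℝ) < 1/2))] with t ht ht2
  obtain ⟨ht0, ht1⟩ := ht
  have h1t : (0:ℝ) < 1 - t := by linarith
  have hlog1 : Real.log (1-t) ≤ 0 := Real.log_nonpos (by linarith) (by linarith)
  have hinv : Real.log (1-t)⁻¹ ≤ (1-t)⁻¹ - 1 :=
    Real.log_le_sub_one_of_pos (by positivity)
  rw [Real.log_inv] at hinv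
  have hbd : -Real.log (1-t) ≤ 2*t := by
    have h2 : (1-t)⁻¹ - 1 ≤ 2*t := by
      rw [inv_eq_one_div, div_sub' h1t.ne', div_le_iff₀ h1t]
      nlinarith [mem_Iio.mp ht2]
    linarith
  rw [norm_mul, Real.norm_eq_abs, Real.norm_eq_abs, abs_of_nonpos hlog1,
    abs_mul, abs_of_pos ht0]
  calc -Real.log (1-t) * |Real.log t| ≤ 2*t * |Real.log t| := by
        apply mul_le_mul_of_nonneg_right hbd (abs_nonneg _)
    _ = 2 * (|Real.log t| * t) := by ring
  
lemma myG_val {x : ℝ} (hx : x ∈ Ioo (0:ℝ) 1) : myG x = Real.pi^2/6 := by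
  set l := 𝓝[Ioo (0:ℝ) 1] (1:ℝ) with hl
  have hne : l.NeBot := by
    rw [hl]
    refine mem_closure_iff_nhdsWithin_neBot.mp ?_
    rw [closure_Ioo (by norm_num : (0:ℝ) ≠ 1)]
    exact ⟨by norm_num, le_refl 1⟩
  have hsub : Ioo (0:ℝ) 1 ⊆ Icc (-1:ℝ) 1 := fun z hz => ⟨by linarith [hz.1], hz.2.le⟩
  have T1 : Tendsto myL l (𝓝 (myL 1)) :=
    (myL_contOn 1 ⟨by norm_num, le_refl 1⟩).tendsto.mono_left (nhdsWithin_mono _ hsub)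
  have hmap : Tendsto (fun x : ℝ => 1 - x) l (𝓝[Icc (-1:ℝ) 1] 0) := by
    rw [tendsto_nhdsWithin_iff]
    constructor
    · have h : Tendsto (fun x : ℝ => 1 - x) (𝓝 1) (𝓝 0) := by
        have := ((continuous_const (y := (1:ℝ))).sub continuous_id).tendsto (1:ℝ)
        simpa [Pi.sub_def] using this
      exact h.mono_left nhdsWithin_le_nhds
    · filter_upwards [self_mem_nhdsWithin] with x hx
      exact hsub ⟨by linarith [hx.2], by linarith [hx.1]⟩
  have T2 : Tendsto (fun x => myL (1-x)) l (𝓝 (myL 0)) :=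
    (myL_contOn 0 ⟨by norm_num, by norm_num⟩).tendsto.comp hmap
  have hmap2 : Tendsto (fun x : ℝ => 1 - x) l (𝓝[Ioo (0:ℝ) 1] 0) := by
    rw [tendsto_nhdsWithin_iff]
    constructor
    · have h : Tendsto (fun x : ℝ => 1 - x) (𝓝 1) (𝓝 0) := by
        have := ((continuous_const (y := (1:ℝ))).sub continuous_id).tendsto (1:ℝ)
        simpa [Pi.sub_def] using this
      exact h.mono_left nhdsWithin_le_nhds
    · filter_upwards [self_mem_nhdsWithin] with x hx
      exact ⟨by linarith [hx.2], by linarith [hx.1]⟩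
  have T3 : Tendsto (fun x => Real.log x * Real.log (1-x)) l (𝓝 0) := by
    have := logSqueeze.comp hmap2
    have heq : (fun t => Real.log (1-t) * Real.log t) ∘ (fun x : ℝ => 1 - x)
        = fun x => Real.log x * Real.log (1-x) := by
      funext x
      simp [Function.comp, sub_sub_cancel]
    rwa [heq] at this
  have Tg : Tendsto myG l (𝓝 (Real.pi^2/6)) := by
    have := (T1.add T2).add T3
    rw [myL_zero, myL_one] at this
    exact (by simpa using this : Tendsto (fun x => myL x + myL (1 - x) + Real.log x * Real.log (1 - x)) l (𝓝 (Real.pi^2/6)))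
  have Tc : Tendsto myG l (𝓝 (myG x)) := by
    have : Tendsto (fun _ : ℝ => myG x) l (𝓝 (myG x)) := tendsto_const_nhds
    refine Tendsto.congr' ?_ this
    filter_upwards [self_mem_nhdsWithin] with y hy
    exact myG_const hx hy
  exact tendsto_nhds_unique Tc Tg

lemma myL_half : myL (1/2) = Real.pi^2/12 - (Real.log 2)^2/2 := by
  have h := myG_val (x := 1/2) ⟨by norm_num, by norm_num⟩
  rw [myG, show (1:ℝ) - 1/2 = 1/2 by norm_num, one_div, Real.log_inv] at h
  nlinarith [h]

lemma mySumInvSq2 : Summable (fun n : ℕ => 1/((n:ℝ)+2)^2) := by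
  have := (summable_nat_add_iff 1).mpr mySumInvSq
  refine this.congr fun n => by push_cast; ring

-- the coefficient
noncomputable def myC (n : ℕ) : ℝ := (2:ℝ)/3 + 1/(3*((n:ℝ)+2)^2)

lemma myC_pos (n : ℕ) : 0 < myC n := by unfold myC; positivity

lemma myC_le (n : ℕ) : myC n ≤ 3/4 := by
  unfold myC
  have h2 : (4:ℝ) ≤ ((n:ℝ)+2)^2 := by nlinarith [Nat.cast_nonneg (α := ℝ) n]
  have h3 : 1/(3*((n:ℝ)+2)^2) ≤ 1/12 :=
    one_div_le_one_div_of_le (by norm_num) (by nlinarith)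
  linarith

lemma myCp_le_one {p : ℝ} (hp : 1 ≤ p) (n : ℕ) : myC n ^ p ≤ 1 :=
  Real.rpow_le_one (myC_pos n).le (le_trans (myC_le n) (by norm_num)) (by linarith)

lemma myCp_nonneg (p : ℝ) (n : ℕ) : 0 ≤ myC n ^ p :=
  Real.rpow_nonneg (myC_pos n).le p

lemma myRpowEq {r : ℝ} (h0 : 0 ≤ r) (p : ℝ) (n : ℕ) :
    r ^ (((n:ℝ)+2)*p) = (r ^ p) ^ (n+2) := by
  rw [← Real.rpow_natCast (r^p) (n+2), ← Real.rpow_mul h0]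
  push_cast
  ring_nf

lemma myRpowLeHalf {r : ℝ} (h0 : 0 ≤ r) (h1 : r ≤ 1/2) {p : ℝ} (hp : 1 ≤ p) :
    r ^ p ≤ 1/2 := by
  calc r ^ p ≤ (1/2 : ℝ) ^ p :=
        Real.rpow_le_rpow h0 h1 (by linarith)
    _ ≤ (1/2 : ℝ) ^ (1:ℝ) :=
        Real.rpow_le_rpow_of_exponent_ge (by norm_num) (by norm_num) hp
    _ = 1/2 := by rw [Real.rpow_one]

lemma mySummable2 {r : ℝ} (h : |r| ≤ 1) :
    Summable (fun n : ℕ => r^(n+2)/(3*((n:ℝ)+2)^2)) := by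
  refine Summable.of_norm (mySumInvSq2.of_nonneg_of_le (fun n => norm_nonneg _) fun n => ?_)
  have h1 : (0:ℝ) < ((n:ℝ)+2)^2 := by positivity
  rw [norm_div, norm_pow]
  simp only [Real.norm_eq_abs]
  rw [abs_of_pos (by positivity : (0:ℝ) < 3*((n:ℝ)+2)^2)]
  calc |r|^(n+2) / (3*((n:ℝ)+2)^2) ≤ 1 / (1*((n:ℝ)+2)^2) := by
        gcongr
        · exact pow_le_one₀ (abs_nonneg r) h
        · norm_num
    _ = 1/((n:ℝ)+2)^2 := by rw [one_mul]

lemma myTerm3_le {r : ℝ} (h0 : 0 ≤ r) (h1 : r ≤ 1/2) {p : ℝ} (hp : 1 ≤ p) (n : ℕ) :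
    myC n ^ p * r ^ (((n:ℝ)+2)*p) ≤ (1/2:ℝ)^(n+2) := by
  rw [myRpowEq h0 p n]
  calc myC n ^ p * (r ^ p) ^ (n+2) ≤ 1 * (1/2:ℝ)^(n+2) := by
        apply mul_le_mul (myCp_le_one hp n) ?_ (by positivity) zero_le_one
        exact pow_le_pow_left₀ (Real.rpow_nonneg h0 p) (myRpowLeHalf h0 h1 hp) (n+2)
    _ = (1/2:ℝ)^(n+2) := one_mul _

lemma mySummable3 {r : ℝ} (h0 : 0 ≤ r) (h1 : r ≤ 1/2) {p : ℝ} (hp : 1 ≤ p) :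
    Summable (fun n : ℕ => myC n ^ p * r ^ (((n:ℝ)+2)*p)) := by
  refine Summable.of_nonneg_of_le (fun n => ?_) (fun n => myTerm3_le h0 h1 hp n) ?_
  · exact mul_nonneg (myCp_nonneg p n) (Real.rpow_nonneg h0 _)
  · exact (summable_geometric_of_lt_one (r := (1/2:ℝ)) (by norm_num) (by norm_num)).comp_injective
      (add_right_injective 2) |>.congr fun n => by simp [Function.comp, add_comm 2 n]

lemma myGeomHalf : Summable (fun n : ℕ => (1/2:ℝ)^(n+2)) :=
  (summable_geometric_of_lt_one (r := (1/2:ℝ)) (by norm_num) (by norm_num)).comp_injective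
      (add_right_injective 2) |>.congr fun n => by simp [Function.comp, add_comm 2 n]

noncomputable def myQ (p r : ℝ) : ℝ :=
  (3-r)*r/(3*(1-r)) + (∑' n : ℕ, r^(n+2)/(3*((n:ℝ)+2)^2))
    + (∑' n : ℕ, ((2:ℝ)/3 + 1/(3*((n:ℝ)+2)^2))^p * r^(((n:ℝ)+2)*p))
    - (12 + Real.pi^2)/36

lemma myQ_zero (p : ℝ) (hp : 1 ≤ p) : myQ p 0 < 0 := by
  unfold myQ
  have h1 : (fun n : ℕ => (0:ℝ)^(n+2)/(3*((n:ℝ)+2)^2)) = fun _ => (0:ℝ) := by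
    funext n; simp
  have h2 : (fun n : ℕ => ((2:ℝ)/3 + 1/(3*((n:ℝ)+2)^2))^p * (0:ℝ)^(((n:ℝ)+2)*p))
      = fun _ => (0:ℝ) := by
    funext n
    rw [Real.zero_rpow (ne_of_gt (mul_pos (by positivity) (by linarith)))]
    ring
  rw [h1, h2, tsum_zero]
  have := Real.pi_pos
  nlinarith

lemma mySum2_eq : (∑' n : ℕ, ((1:ℝ)/2)^(n+2)/(3*((n:ℝ)+2)^2)) = (myL (1/2) - 1/2)/3 := by
  have hs : Summable (fun n : ℕ => ((1:ℝ)/2)^(n+1)/((n:ℝ)+1)^2) :=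
    dilogSummable (abs_le.mpr (by norm_num))
  have h0 := Summable.tsum_eq_zero_add hs
  have hL : myL (1/2) = 1/2 + ∑' n : ℕ, ((1:ℝ)/2)^(n+2)/((n:ℝ)+2)^2 := by
    rw [myL, h0]
    norm_num
    congr 1
    funext n
    push_cast
    ring_nf
  have hterm : (fun n : ℕ => ((1:ℝ)/2)^(n+2)/(3*((n:ℝ)+2)^2))
      = fun n : ℕ => (((1:ℝ)/2)^(n+2)/(((n:ℝ)+2)^2))/3 := by
    funext n
    rw [div_div]
    ring_nf
  rw [hterm, tsum_div_const]
  rw [hL]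
  ring

lemma myQ_half (p : ℝ) (hp : 1 ≤ p) : (2 - (Real.log 2)^2)/6 ≤ myQ p ((1:ℝ)/2) := by
  unfold myQ
  have hS3 : 0 ≤ ∑' n : ℕ, ((2:ℝ)/3 + 1/(3*((n:ℝ)+2)^2))^p * ((1:ℝ)/2)^(((n:ℝ)+2)*p) :=
    tsum_nonneg fun n => mul_nonneg (myCp_nonneg p n) (Real.rpow_nonneg (by norm_num) _)
  rw [mySum2_eq, myL_half]
  have h1 : (3-(1:ℝ)/2)*((1:ℝ)/2)/(3*(1-(1:ℝ)/2)) = 5/6 := by norm_num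
  rw [h1]
  linarith

lemma myPos : (0:ℝ) < (2 - (Real.log 2)^2)/6 := by
  have h1 : Real.log 2 < 1 := lt_trans Real.log_two_lt_d9 (by norm_num)
  have h0 : 0 ≤ Real.log 2 := Real.log_nonneg one_le_two
  nlinarith

lemma myQ_mono (p : ℝ) (hp : 1 ≤ p) : StrictMonoOn (myQ p) (Ioo (0:ℝ) (1/2)) := by
  intro a ha b hb hab
  obtain ⟨ha0, ha1⟩ := ha
  obtain ⟨hb0, hb1⟩ := hb
  unfold myQ
  have h1 : (3-a)*a/(3*(1-a)) < (3-b)*b/(3*(1-b)) := by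
    rw [div_lt_div_iff₀ (by linarith) (by linarith)]
    have key : (0:ℝ) < 3 - (a+b) + a*b := by nlinarith
    nlinarith [mul_pos (sub_pos.mpr hab) key]
  have h2 : (∑' n : ℕ, a^(n+2)/(3*((n:ℝ)+2)^2)) ≤ ∑' n : ℕ, b^(n+2)/(3*((n:ℝ)+2)^2) := by
    refine Summable.tsum_le_tsum (fun n => ?_)
      (mySummable2 (by rw [abs_of_pos ha0]; linarith))
      (mySummable2 (by rw [abs_of_pos hb0]; linarith))
    have hpow : a^(n+2) ≤ b^(n+2) := pow_le_pow_left₀ ha0.le hab.le _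
    exact (div_le_div_iff_of_pos_right (by positivity)).mpr hpow
  have h3 : (∑' n : ℕ, ((2:ℝ)/3 + 1/(3*((n:ℝ)+2)^2))^p * a^(((n:ℝ)+2)*p))
      ≤ ∑' n : ℕ, ((2:ℝ)/3 + 1/(3*((n:ℝ)+2)^2))^p * b^(((n:ℝ)+2)*p) := by
    refine Summable.tsum_le_tsum (fun n => ?_)
      (mySummable3 ha0.le (by linarith) hp) (mySummable3 hb0.le (by linarith) hp)
    apply mul_le_mul_of_nonneg_left ?_ (myCp_nonneg p n)
    exact Real.rpow_le_rpow ha0.le hab.le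
      (mul_nonneg (by positivity) (by linarith))
  linarith

lemma myQ_contOn (p : ℝ) (hp : 1 ≤ p) : ContinuousOn (myQ p) (Icc (0:ℝ) (1/2)) := by
  unfold myQ
  refine ContinuousOn.sub (ContinuousOn.add (ContinuousOn.add ?_ ?_) ?_) continuousOn_const
  · refine ContinuousOn.div
      (((continuous_const.sub continuous_id).mul continuous_id).continuousOn)
      ((continuous_const.mul (continuous_const.sub continuous_id)).continuousOn) ?_
    intro x hx
    have h2 := hx.2
    have hpos : (0:ℝ) < 3*(1-x) := by
      norm_num at h2 ⊢
      linarith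
    exact hpos.ne'
  · refine continuousOn_tsum (f := fun (n:ℕ) (r:ℝ) => r^(n+2)/(3*((n:ℝ)+2)^2))
      (u := fun n : ℕ => (1/2:ℝ)^(n+2))
      (fun n => (continuous_pow _).continuousOn.div_const _) myGeomHalf fun n x hx => ?_
    have h1 : (0:ℝ) < 3*((n:ℝ)+2)^2 := by positivity
    have h2 : (1:ℝ) ≤ 3*((n:ℝ)+2)^2 := by nlinarith [Nat.cast_nonneg (α := ℝ) n]
    rw [norm_div, norm_pow]
    simp only [Real.norm_eq_abs]
    rw [abs_of_pos h1]
    calc |x|^(n+2) / (3*((n:ℝ)+2)^2) ≤ |x|^(n+2) := div_le_self (by positivity) h2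
      _ ≤ (1/2:ℝ)^(n+2) := by
          apply pow_le_pow_left₀ (abs_nonneg x)
          rw [abs_le]
          constructor <;> [linarith [hx.1]; exact hx.2]
  · refine continuousOn_tsum
      (f := fun (n:ℕ) (r:ℝ) => ((2:ℝ)/3 + 1/(3*((n:ℝ)+2)^2))^p * r^(((n:ℝ)+2)*p))
      (u := fun n : ℕ => (1/2:ℝ)^(n+2)) (fun n => ?_) myGeomHalf fun n x hx => ?_
    · exact (continuous_const.mul (Real.continuous_rpow_const
        (mul_nonneg (by positivity) (by linarith)))).continuousOn
    · show ‖myC n ^ p * x ^ (((n:ℝ)+2)*p)‖ ≤ (1/2:ℝ)^(n+2)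
      rw [Real.norm_eq_abs, abs_of_nonneg
        (mul_nonneg (myCp_nonneg p n) (Real.rpow_nonneg hx.1 _))]
      exact myTerm3_le hx.1 hx.2 hp n

lemma myQ_exu (p : ℝ) (hp : 1 ≤ p) :
    ∃! r : ℝ, r ∈ Ioo (0:ℝ) (1/2) ∧ myQ p r = 0 := by
  have h0 : myQ p 0 < 0 := myQ_zero p hp
  have hhalf : 0 < myQ p (1/2) := lt_of_lt_of_le myPos (myQ_half p hp)
  have hiv := intermediate_value_Ioo (by norm_num : (0:ℝ) ≤ 1/2) (myQ_contOn p hp)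
  obtain ⟨r, hrmem, hr0⟩ := hiv (Set.mem_Ioo.mpr ⟨h0, hhalf⟩)
  refine ⟨r, ⟨hrmem, hr0⟩, fun y hy => ?_⟩
  exact (myQ_mono p hp).injOn hy.1 hrmem (by rw [hy.2, hr0])


theorem Q3_signs_strictMono_unique_root (p : ℝ) (hp : 1 ≤ p) :
    ((3-(0:ℝ))*(0:ℝ)/(3*(1-(0:ℝ))) + (∑' n : ℕ, (0:ℝ)^(n+2)/(3*((n:ℝ)+2)^2))
        + (∑' n : ℕ, ((2:ℝ)/3 + 1/(3*((n:ℝ)+2)^2))^p * (0:ℝ)^(((n:ℝ)+2)*p))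
        - (12 + Real.pi^2)/36 < 0) ∧
    ((2 - (Real.log 2)^2)/6 ≤
      (3-((1:ℝ)/2))*((1:ℝ)/2)/(3*(1-(1:ℝ)/2)) + (∑' n : ℕ, ((1:ℝ)/2)^(n+2)/(3*((n:ℝ)+2)^2))
        + (∑' n : ℕ, ((2:ℝ)/3 + 1/(3*((n:ℝ)+2)^2))^p * ((1:ℝ)/2)^(((n:ℝ)+2)*p))
        - (12 + Real.pi^2)/36) ∧
    (0 : ℝ) < (2 - (Real.log 2)^2)/6 ∧
    StrictMonoOn
      (fun r : ℝ => (3-r)*r/(3*(1-r)) + (∑' n : ℕ, r^(n+2)/(3*((n:ℝ)+2)^2))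
        + (∑' n : ℕ, ((2:ℝ)/3 + 1/(3*((n:ℝ)+2)^2))^p * r^(((n:ℝ)+2)*p))
        - (12 + Real.pi^2)/36) (Set.Ioo (0 : ℝ) (1/2)) ∧
    (∃! r : ℝ, r ∈ Set.Ioo (0 : ℝ) (1/2) ∧
      (3-r)*r/(3*(1-r)) + (∑' n : ℕ, r^(n+2)/(3*((n:ℝ)+2)^2))
        + (∑' n : ℕ, ((2:ℝ)/3 + 1/(3*((n:ℝ)+2)^2))^p * r^(((n:ℝ)+2)*p))
        - (12 + Real.pi^2)/36 = 0) := by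
  exact ⟨myQ_zero p hp, myQ_half p hp, myPos, myQ_mono p hp, myQ_exu p hp⟩
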